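/- Let x, y ∈ Hⁿ and w, z ∈ ℝ^{n+1} with ⟨w, w⟩ = ⟨z, z⟩ = 1, ⟨x, w⟩ = ⟨y, z⟩ = 0, so that α(t) = cosh(t)·x + sinh(t)·w and β(t) = cosh(t)·y + sinh(t)·z are unit-speed geodesics in Hⁿ. Fix l > 0 and define γ(t) = P₁(α(t), β(t)) and δ(t) = P₂(α(t), β(t)). Then for every t ∈ [0, l], γ(t) lies on the line segment in ℝⁿ joining γ(0) and γ(l), and δ(t) lies on the line segment joining δ(0) and δ(l); moreover ‖γ(0) − γ(l)‖ = ‖δ(0) − δ(l)‖. In particular, Φ maps a pair of geodesic segments of the same length in Hⁿ to a pair of line segments of the same length in ℝⁿ. -/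

import Mathlib

open scoped BigOperators

noncomputable section

/-- The Minkowski product on `ℝ^{n+1}`: `⟨x,y⟩ = -x₀y₀ + ∑_{i=1}^n xᵢyᵢ`. -/
def mink {n : ℕ} (x y : Fin (n + 1) → ℝ) : ℝ :=
  -(x 0 * y 0) + ∑ i : Fin n, x i.succ * y i.succ

/-- The vector `e = (1, 0, …, 0)` in `ℝ^{n+1}`. -/
def eVec (n : ℕ) : Fin (n + 1) → ℝ := fun i => if i = 0 then 1 else 0

/-- Projection `𝒫 : ℝ^{n+1} → ℝⁿ`, forgetting the 0-th coordinate, landing in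
Euclidean space (with the Euclidean norm). -/
def proj {n : ℕ} (x : Fin (n + 1) → ℝ) : EuclideanSpace ℝ (Fin n) :=
  WithLp.toLp 2 (fun i : Fin n => x i.succ)

/-- The hyperboloid model `Hⁿ = {x : ⟨x,x⟩ = -1, x₀ > 0}`. -/
def Hyp (n : ℕ) : Set (Fin (n + 1) → ℝ) := {x | mink x x = -1 ∧ 0 < x 0}

/-- First component of the Pogorelov map: `P₁(x,y) = 2𝒫(x)/(-⟨x+y,e⟩)`. -/
def P1 {n : ℕ} (x y : Fin (n + 1) → ℝ) : EuclideanSpace ℝ (Fin n) :=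
  (2 / (-(mink (x + y) (eVec n)))) • proj x

/-- Second component of the Pogorelov map: `P₂(x,y) = 2𝒫(y)/(-⟨x+y,e⟩)`. -/
def P2 {n : ℕ} (x y : Fin (n + 1) → ℝ) : EuclideanSpace ℝ (Fin n) :=
  (2 / (-(mink (x + y) (eVec n)))) • proj y

/-- The function `f(a,b) = (2+‖a‖+‖b‖)(2-‖a‖+‖b‖)(2+‖a‖-‖b‖)(2-‖a‖-‖b‖)`. -/
def fQ {n : ℕ} (a b : EuclideanSpace ℝ (Fin n)) : ℝ :=
  (2 + ‖a‖ + ‖b‖) * (2 - ‖a‖ + ‖b‖) * (2 + ‖a‖ - ‖b‖) * (2 - ‖a‖ - ‖b‖)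

/-- The vector in `ℝ^{n+1}` with 0-th coordinate `t` and `𝒫`-projection `v`. -/
def liftVec {n : ℕ} (t : ℝ) (v : EuclideanSpace ℝ (Fin n)) : Fin (n + 1) → ℝ :=
  Fin.cons t (fun i => v i)

/-- First component of `Ψ(a,b)`, namely `(√(‖x̂‖²+1), x̂)` with `x̂ = 4a/√f(a,b)`. -/
def Psi1 {n : ℕ} (a b : EuclideanSpace ℝ (Fin n)) : Fin (n + 1) → ℝ :=
  liftVec (Real.sqrt (‖(4 / Real.sqrt (fQ a b)) • a‖ ^ 2 + 1)) ((4 / Real.sqrt (fQ a b)) • a)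

/-- Second component of `Ψ(a,b)`, namely `(√(‖ŷ‖²+1), ŷ)` with `ŷ = 4b/√f(a,b)`. -/
def Psi2 {n : ℕ} (a b : EuclideanSpace ℝ (Fin n)) : Fin (n + 1) → ℝ :=
  liftVec (Real.sqrt (‖(4 / Real.sqrt (fQ a b)) • b‖ ^ 2 + 1)) ((4 / Real.sqrt (fQ a b)) • b)

lemma mink_eVec {n : ℕ} (v : Fin (n + 1) → ℝ) : mink v (eVec n) = -(v 0) := by
  simp [mink, eVec, Fin.succ_ne_zero]

lemma norm_sq_euclid {n : ℕ} (v : EuclideanSpace ℝ (Fin n)) : ‖v‖ ^ 2 = ∑ i, v i ^ 2 := by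
  rw [EuclideanSpace.norm_eq, Real.sq_sqrt (by positivity)]
  simp [Real.norm_eq_abs, sq_abs]

/-- Positivity of the zero coordinate along a geodesic. -/
lemma geo_pos {n : ℕ} (x w : Fin (n + 1) → ℝ) (hxm : mink x x = -1) (hx0 : 0 < x 0)
    (hw : mink w w = 1) (hxw : mink x w = 0) (t : ℝ) :
    0 < Real.cosh t * x 0 + Real.sinh t * w 0 := by
  have hCS := Finset.sum_mul_sq_le_sq_mul_sq Finset.univ (fun i : Fin n => x i.succ)
    (fun i : Fin n => w i.succ)
  simp only [sq] at hCS
  unfold mink at hxm hw hxw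
  have Sxx : ∑ i : Fin n, x i.succ * x i.succ = x 0 * x 0 - 1 := by linarith
  have Sww : ∑ i : Fin n, w i.succ * w i.succ = w 0 * w 0 + 1 := by linarith
  have Sxw : ∑ i : Fin n, x i.succ * w i.succ = x 0 * w 0 := by linarith
  rw [Sxx, Sww, Sxw] at hCS
  have hw2 : w 0 ^ 2 ≤ x 0 ^ 2 - 1 := by nlinarith [hCS]
  nlinarith [Real.cosh_pos t, Real.cosh_sq_sub_sinh_sq t, mul_pos (Real.cosh_pos t) hx0,
    sq_nonneg (Real.cosh t * x 0 + Real.sinh t * w 0), sq_nonneg (Real.sinh t),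
    sq_nonneg (Real.cosh t * w 0 + Real.sinh t * x 0), sq_nonneg (Real.cosh t * w 0 - Real.sinh t * x 0)]

set_option maxHeartbeats 2000000 in
/-- the Pogorelov map sends a pair of geodesic segments of the same
length in `Hⁿ` to a pair of line segments of the same length in `ℝⁿ`. -/
theorem statement_3 {n : ℕ} (hn : 1 ≤ n) (x y w z : Fin (n + 1) → ℝ)
    (hx : x ∈ Hyp n) (hy : y ∈ Hyp n)
    (hw : mink w w = 1) (hz : mink z z = 1)
    (hxw : mink x w = 0) (hyz : mink y z = 0)
    (l : ℝ) (hl : 0 < l)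
    (α β : ℝ → Fin (n + 1) → ℝ)
    (hα : ∀ t, α t = Real.cosh t • x + Real.sinh t • w)
    (hβ : ∀ t, β t = Real.cosh t • y + Real.sinh t • z)
    (γ δ : ℝ → EuclideanSpace ℝ (Fin n))
    (hγ : ∀ t, γ t = P1 (α t) (β t)) (hδ : ∀ t, δ t = P2 (α t) (β t)) :
    (∀ t ∈ Set.Icc (0 : ℝ) l, ∃ s ∈ Set.Icc (0 : ℝ) 1,
        γ t = (1 - s) • γ 0 + s • γ l) ∧
    (∀ t ∈ Set.Icc (0 : ℝ) l, ∃ s ∈ Set.Icc (0 : ℝ) 1,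
        δ t = (1 - s) • δ 0 + s • δ l) ∧
    ‖γ 0 - γ l‖ = ‖δ 0 - δ l‖ := by
  obtain ⟨hxm, hx0⟩ := hx
  obtain ⟨hym, hy0⟩ := hy
  have hA : (0:ℝ) < x 0 + y 0 := by linarith
  have hD : ∀ t, 0 < Real.cosh t * (x 0 + y 0) + Real.sinh t * (w 0 + z 0) := by
    intro t
    have h1 := geo_pos x w hxm hx0 hw hxw t
    have h2 := geo_pos y z hym hy0 hz hyz t
    nlinarith
  have hsl : 0 < Real.sinh l := Real.sinh_pos_iff.mpr hl
  have hγt : ∀ t (i : Fin n), γ t i =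
      2 / (Real.cosh t * (x 0 + y 0) + Real.sinh t * (w 0 + z 0)) *
        (Real.cosh t * x i.succ + Real.sinh t * w i.succ) := by
    intro t i
    rw [hγ t]
    simp only [P1, mink_eVec, hα, hβ, PiLp.smul_apply, smul_eq_mul, proj, Pi.add_apply,
      Pi.smul_apply, neg_neg, PiLp.toLp_apply]
    ring
  have hδt : ∀ t (i : Fin n), δ t i =
      2 / (Real.cosh t * (x 0 + y 0) + Real.sinh t * (w 0 + z 0)) *
        (Real.cosh t * y i.succ + Real.sinh t * z i.succ) := by
    intro t i
    rw [hδ t]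
    simp only [P2, mink_eVec, hα, hβ, PiLp.smul_apply, smul_eq_mul, proj, Pi.add_apply,
      Pi.smul_apply, neg_neg, PiLp.toLp_apply]
    ring
  -- generic "segment" statement
  have seg : ∀ (u v : Fin (n + 1) → ℝ) (g : ℝ → EuclideanSpace ℝ (Fin n)),
      (∀ t (i : Fin n), g t i =
        2 / (Real.cosh t * (x 0 + y 0) + Real.sinh t * (w 0 + z 0)) *
          (Real.cosh t * u i.succ + Real.sinh t * v i.succ)) →
      ∀ t ∈ Set.Icc (0 : ℝ) l, ∃ s ∈ Set.Icc (0 : ℝ) 1,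
        g t = (1 - s) • g 0 + s • g l := by
    intro u v g hg t ht
    obtain ⟨ht0, htl⟩ := ht
    refine ⟨Real.sinh t * (Real.cosh l * (x 0 + y 0) + Real.sinh l * (w 0 + z 0)) /
        (Real.sinh l * (Real.cosh t * (x 0 + y 0) + Real.sinh t * (w 0 + z 0))), ⟨?_, ?_⟩, ?_⟩
    · exact div_nonneg (mul_nonneg (Real.sinh_nonneg_iff.mpr ht0) (hD l).le)
        (mul_nonneg hsl.le (hD t).le)
    · rw [div_le_one (mul_pos hsl (hD t))]
      have h1 : 0 ≤ Real.sinh (l - t) := Real.sinh_nonneg_iff.mpr (by linarith)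
      rw [Real.sinh_sub] at h1
      nlinarith [mul_nonneg hA.le h1]
    · ext i
      show g t i = (1 - _) * g 0 i + _ * g l i
      rw [hg t i, hg 0 i, hg l i, Real.cosh_zero, Real.sinh_zero]
      have h0 : (x 0 + y 0) ≠ 0 := hA.ne'
      have hDt' := (hD t).ne'
      have hDl' := (hD l).ne'
      have hsl' := hsl.ne'
      set A := x 0 + y 0
      set B := w 0 + z 0
      have hDl'' : A * Real.cosh l + B * Real.sinh l ≠ 0 := by rw [mul_comm A, mul_comm B]; exact hDl'
      simp only [mul_zero, add_zero]
      field_simp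
      linear_combination (u i.succ * Real.sinh t * Real.cosh l - Real.cosh t * u i.succ * Real.sinh l) * mul_inv_cancel₀ h0
  refine ⟨seg x w γ hγt, seg y z δ hδt, ?_⟩
  -- the equal-length part
  have expand : ∀ (P Q : ℝ) (u v : Fin (n + 1) → ℝ),
      ∑ i : Fin n, (P * u i.succ + Q * v i.succ) ^ 2
        = P ^ 2 * (∑ i : Fin n, u i.succ * u i.succ)
          + 2 * P * Q * (∑ i : Fin n, u i.succ * v i.succ)
          + Q ^ 2 * (∑ i : Fin n, v i.succ * v i.succ) := by
    intro P Q u v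
    rw [Finset.mul_sum, Finset.mul_sum, Finset.mul_sum, ← Finset.sum_add_distrib,
      ← Finset.sum_add_distrib]
    exact Finset.sum_congr rfl fun i _ => by ring
  have hγsq : ‖γ 0 - γ l‖ ^ 2 = ∑ i : Fin n,
      ((2 / (x 0 + y 0) - 2 * Real.cosh l /
          (Real.cosh l * (x 0 + y 0) + Real.sinh l * (w 0 + z 0))) * x i.succ +
        (-(2 * Real.sinh l /
          (Real.cosh l * (x 0 + y 0) + Real.sinh l * (w 0 + z 0)))) * w i.succ) ^ 2 := by
    rw [norm_sq_euclid]
    refine Finset.sum_congr rfl fun i _ => ?_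
    have hsub : (γ 0 - γ l) i = γ 0 i - γ l i := rfl
    rw [hsub, hγt 0 i, hγt l i, Real.cosh_zero, Real.sinh_zero]
    ring
  have hδsq : ‖δ 0 - δ l‖ ^ 2 = ∑ i : Fin n,
      ((2 / (x 0 + y 0) - 2 * Real.cosh l /
          (Real.cosh l * (x 0 + y 0) + Real.sinh l * (w 0 + z 0))) * y i.succ +
        (-(2 * Real.sinh l /
          (Real.cosh l * (x 0 + y 0) + Real.sinh l * (w 0 + z 0)))) * z i.succ) ^ 2 := by
    rw [norm_sq_euclid]
    refine Finset.sum_congr rfl fun i _ => ?_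
    have hsub : (δ 0 - δ l) i = δ 0 i - δ l i := rfl
    rw [hsub, hδt 0 i, hδt l i, Real.cosh_zero, Real.sinh_zero]
    ring
  unfold mink at hxm hym hw hz hxw hyz
  have Sxx : ∑ i : Fin n, x i.succ * x i.succ = x 0 * x 0 - 1 := by linarith
  have Sww : ∑ i : Fin n, w i.succ * w i.succ = w 0 * w 0 + 1 := by linarith
  have Sxw : ∑ i : Fin n, x i.succ * w i.succ = x 0 * w 0 := by linarith
  have Syy : ∑ i : Fin n, y i.succ * y i.succ = y 0 * y 0 - 1 := by linarith
  have Szz : ∑ i : Fin n, z i.succ * z i.succ = z 0 * z 0 + 1 := by linarith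
  have Syz : ∑ i : Fin n, y i.succ * z i.succ = y 0 * z 0 := by linarith
  have hsq : ‖γ 0 - γ l‖ ^ 2 = ‖δ 0 - δ l‖ ^ 2 := by
    rw [hγsq, hδsq, expand, expand, Sxx, Sww, Sxw, Syy, Szz, Syz]
    have h0 : (x 0 + y 0) ≠ 0 := hA.ne'
    have hDl' : (Real.cosh l * (x 0 + y 0) + Real.sinh l * (w 0 + z 0)) ≠ 0 := (hD l).ne'
    set A := x 0 + y 0
    set B := w 0 + z 0
    have hDl'' : A * Real.cosh l + Real.sinh l * B ≠ 0 := by rw [mul_comm A]; exact hDl'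
    field_simp
    ring
  rw [← Real.sqrt_sq (norm_nonneg (γ 0 - γ l)), ← Real.sqrt_sq (norm_nonneg (δ 0 - δ l)), hsq]
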